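/- Let v ≥ 1 be an integer and x > 0 a real number. If λ ∈ ℝ^v and b ∈ ℝ^v satisfy ∑_{j=1}^v J_{kj}(x)·λ_j = b_k for all k = 1,…,v, and ∑_{k=1}^v b_k = 0, then ∑_{k=1}^v λ_k = 0. -/

import Mathlib

open Real

/-- Chi-squared cumulative distribution function with `ν` degrees of freedom. -/
noncomputable def chiCDF (ν x : ℝ) : ℝ :=
  ((2 : ℝ) ^ (ν / 2) * Real.Gamma (ν / 2))⁻¹ *
    ∫ t in (0 : ℝ)..x, t ^ (ν / 2 - 1) * Real.exp (-t / 2)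

/-- The `v×v` matrix `J(x)` with entries
`J_{kj}(x) = (1/2)·[(1 + 2δ_{kj})·F_{v+4}(x)/F_v(x) − F_{v+2}(x)²/F_v(x)²]`. -/
noncomputable def Jmat (v : ℕ) (x : ℝ) : Matrix (Fin v) (Fin v) ℝ :=
  Matrix.of fun k j =>
    (1 / 2) * ((1 + 2 * (if k = j then (1 : ℝ) else 0)) * chiCDF (v + 4) x / chiCDF v x
      - (chiCDF (v + 2) x) ^ 2 / (chiCDF v x) ^ 2)

section AuxCS
open Real MeasureTheory Set

noncomputable def Gg (p x : ℝ) : ℝ := ∫ t in Set.Ioc 0 x, t ^ p * Real.exp (-t / 2)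

lemma Gg_integrableOn {p x : ℝ} (hp : -1 < p) :
    IntegrableOn (fun t : ℝ => t ^ p * Real.exp (-t / 2)) (Set.Ioc 0 x) := by
  have h1 : IntegrableOn (fun t : ℝ => t ^ p) (Set.Ioc 0 x) :=
    (intervalIntegral.intervalIntegrable_rpow' hp (a := 0) (b := x)).1
  apply Integrable.mono' h1
  · have hg : Measurable fun t : ℝ => Real.exp (Real.log t * p) * Real.exp (-t / 2) :=
      ((Real.measurable_log.mul_const p).exp).mul
        (Real.measurable_exp.comp (measurable_id.neg.div_const 2))
    apply hg.aestronglyMeasurable.congr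
    filter_upwards [ae_restrict_mem measurableSet_Ioc] with t ht
    rw [Real.rpow_def_of_pos ht.1]
  · filter_upwards [ae_restrict_mem measurableSet_Ioc] with t ht
    have ht0 : 0 < t := ht.1
    have h2 : Real.exp (-t / 2) ≤ 1 := by
      rw [Real.exp_le_one_iff]; linarith
    have h3 : 0 ≤ t ^ p := Real.rpow_nonneg ht0.le p
    rw [Real.norm_eq_abs, abs_mul, abs_of_nonneg h3, abs_of_pos (Real.exp_pos _)]
    nlinarith [Real.exp_pos (-t/2)]

lemma Gg_pos {p x : ℝ} (hp : -1 < p) (hx : 0 < x) : 0 < Gg p x := by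
  rw [Gg, ← intervalIntegral.integral_of_le hx.le]
  apply intervalIntegral.intervalIntegral_pos_of_pos_on
  · exact (intervalIntegrable_iff_integrableOn_Ioc_of_le hx.le).2 (Gg_integrableOn hp)
  · intro t ht
    exact mul_pos (Real.rpow_pos_of_pos ht.1 p) (Real.exp_pos _)
  · exact hx

lemma Gg_var {p x : ℝ} (hp : -1 < p) (hx : 0 < x) :
    (Gg (p + 1) x) ^ 2 < Gg p x * Gg (p + 2) x := by
  set m : ℝ := Gg (p + 1) x / Gg p x with hm
  have h0 := Gg_integrableOn (x := x) (p := p) hp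
  have h1 := Gg_integrableOn (x := x) (p := p + 1) (by linarith)
  have h2 := Gg_integrableOn (x := x) (p := p + 2) (by linarith)
  have hG0 := Gg_pos hp hx
  have hae : ∀ᵐ t ∂(volume.restrict (Set.Ioc (0:ℝ) x)),
      (t - m) ^ 2 * (t ^ p * Real.exp (-t / 2)) =
      t ^ (p + 2) * Real.exp (-t / 2) - 2 * m * (t ^ (p + 1) * Real.exp (-t / 2))
        + m ^ 2 * (t ^ p * Real.exp (-t / 2)) := by
    filter_upwards [ae_restrict_mem measurableSet_Ioc] with t ht
    have ha : t ^ (p + 1) = t ^ p * t := Real.rpow_add_one (ne_of_gt ht.1) p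
    have hb : t ^ (p + 2) = t ^ (p + 1) * t := by
      have : p + 2 = (p + 1) + 1 := by ring
      rw [this, Real.rpow_add_one (ne_of_gt ht.1)]
    rw [hb, ha]; ring
  have hint : IntegrableOn (fun t : ℝ => (t - m) ^ 2 * (t ^ p * Real.exp (-t / 2)))
      (Set.Ioc 0 x) := by
    apply Integrable.congr ((h2.sub (h1.const_mul (2 * m))).add (h0.const_mul (m ^ 2)))
    filter_upwards [hae] with t ht using ht.symm
  have key : 0 < ∫ t in Set.Ioc (0:ℝ) x, (t - m) ^ 2 * (t ^ p * Real.exp (-t / 2)) := by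
    rw [setIntegral_pos_iff_support_of_nonneg_ae _ hint]
    · have hsub : Set.Ioc 0 x \ {m} ⊆
          Function.support (fun t : ℝ => (t - m) ^ 2 * (t ^ p * Real.exp (-t / 2)))
            ∩ Set.Ioc 0 x := by
        intro t ht
        refine ⟨?_, ht.1⟩
        have htm : t ≠ m := ht.2
        have : 0 < (t - m) ^ 2 * (t ^ p * Real.exp (-t / 2)) :=
          mul_pos (sq_pos_of_ne_zero (sub_ne_zero.mpr htm))
            (mul_pos (Real.rpow_pos_of_pos ht.1.1 p) (Real.exp_pos _))
        exact ne_of_gt this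
      calc (0 : ENNReal) < ENNReal.ofReal x := by simpa using hx
        _ = volume (Set.Ioc (0:ℝ) x \ {m}) := by
            rw [measure_diff_null (measure_singleton m), Real.volume_Ioc]; simp
        _ ≤ _ := measure_mono hsub
    · filter_upwards [ae_restrict_mem measurableSet_Ioc] with t ht
      exact mul_nonneg (sq_nonneg _)
        (mul_nonneg (Real.rpow_nonneg ht.1.le p) (Real.exp_pos _).le)
  have e1 : ∫ t in Set.Ioc (0:ℝ) x, (t - m) ^ 2 * (t ^ p * Real.exp (-t / 2)) =
      Gg (p + 2) x - 2 * m * Gg (p + 1) x + m ^ 2 * Gg p x := by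
    have hs : IntegrableOn (fun t : ℝ => t ^ (p + 2) * Real.exp (-t / 2)
        - 2 * m * (t ^ (p + 1) * Real.exp (-t / 2))) (Set.Ioc 0 x) :=
      h2.sub (h1.const_mul (2 * m))
    rw [integral_congr_ae hae, integral_add hs (h0.const_mul (m ^ 2)),
      integral_sub h2 (h1.const_mul (2 * m)), integral_const_mul, integral_const_mul]
    rfl
  rw [e1] at key
  have h3 := mul_pos hG0 key
  have h4 : Gg p x * (Gg (p + 2) x - 2 * m * Gg (p + 1) x + m ^ 2 * Gg p x)
      = Gg p x * Gg (p + 2) x - Gg (p + 1) x ^ 2 := by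
    rw [hm]; field_simp; ring
  linarith [h3, h4]

end AuxCS

section AuxCS2
open Real MeasureTheory Set
lemma chiCDF_eq (ν x : ℝ) (hx : 0 ≤ x) :
    chiCDF ν x = ((2 : ℝ) ^ (ν / 2) * Real.Gamma (ν / 2))⁻¹ * Gg (ν / 2 - 1) x := by
  rw [chiCDF, intervalIntegral.integral_of_le hx]; rfl

end AuxCS2

open Real MeasureTheory Set in
/-- If `J(x)·λ = b` and the entries of `b` sum to zero, then the entries of `λ`
sum to zero. -/
theorem sum_eq_zero_of_Jmat_mulVec (v : ℕ) (hv : 1 ≤ v) (x : ℝ) (hx : 0 < x)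
    (lam b : Fin v → ℝ) (h : ∀ k, ∑ j : Fin v, Jmat v x k j * lam j = b k)
    (hb : ∑ k : Fin v, b k = 0) :
    ∑ k : Fin v, lam k = 0 := by
  have hv1 : (1 : ℝ) ≤ (v : ℝ) := by exact_mod_cast hv
  have hvpos : (0 : ℝ) < v := by linarith
  set p : ℝ := (v : ℝ) / 2 - 1 with hpdef
  have hp : -1 < p := by rw [hpdef]; linarith
  have hΓ : 0 < Real.Gamma ((v : ℝ) / 2) := Real.Gamma_pos_of_pos (by linarith)
  have hc : 0 < (2 : ℝ) ^ ((v : ℝ) / 2) * Real.Gamma ((v : ℝ) / 2) :=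
    mul_pos (Real.rpow_pos_of_pos two_pos _) hΓ
  have hG0 : 0 < Gg p x := Gg_pos hp hx
  have hG1 : 0 < Gg (p + 1) x := Gg_pos (by linarith) hx
  have hG2 : 0 < Gg (p + 2) x := Gg_pos (by linarith) hx
  have hvar : (Gg (p + 1) x) ^ 2 < Gg p x * Gg (p + 2) x := Gg_var hp hx
  -- expressions for the three CDFs
  have hvne : (v : ℝ) / 2 ≠ 0 := by positivity
  have hF0 : chiCDF v x = ((2 : ℝ) ^ ((v : ℝ) / 2) * Real.Gamma ((v : ℝ) / 2))⁻¹ * Gg p x :=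
    chiCDF_eq _ _ hx.le
  have hF2 : chiCDF ((v : ℝ) + 2) x =
      ((v : ℝ) * ((2 : ℝ) ^ ((v : ℝ) / 2) * Real.Gamma ((v : ℝ) / 2)))⁻¹ * Gg (p + 1) x := by
    rw [chiCDF_eq _ _ hx.le]
    have e1 : ((v : ℝ) + 2) / 2 = (v : ℝ) / 2 + 1 := by ring
    have e2 : ((v : ℝ) + 2) / 2 - 1 = p + 1 := by rw [hpdef]; ring
    rw [e2, e1, Real.rpow_add two_pos, Real.rpow_one, Real.Gamma_add_one hvne]
    ring_nf
  have hF4 : chiCDF ((v : ℝ) + 4) x =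
      ((v : ℝ) * ((v : ℝ) + 2) * ((2 : ℝ) ^ ((v : ℝ) / 2) * Real.Gamma ((v : ℝ) / 2)))⁻¹
        * Gg (p + 2) x := by
    rw [chiCDF_eq _ _ hx.le]
    have e1 : ((v : ℝ) + 4) / 2 = ((v : ℝ) / 2 + 1) + 1 := by ring
    have e2 : ((v : ℝ) + 4) / 2 - 1 = p + 2 := by rw [hpdef]; ring
    rw [e2, e1, Real.rpow_add two_pos, Real.rpow_add two_pos, Real.rpow_one,
      Real.Gamma_add_one (by positivity : (v : ℝ) / 2 + 1 ≠ 0), Real.Gamma_add_one hvne]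
    have : (v : ℝ) * ((v : ℝ) + 2) = (2 * 2) * (((v : ℝ) / 2 + 1) * ((v : ℝ) / 2)) := by ring
    rw [show ((v : ℝ) * ((v : ℝ) + 2) * ((2 : ℝ) ^ ((v : ℝ) / 2) * Real.Gamma ((v : ℝ) / 2)))
        = ((2 : ℝ) ^ ((v : ℝ) / 2) * 2 * 2 * (((v : ℝ) / 2 + 1) * ((v : ℝ) / 2
          * Real.Gamma ((v : ℝ) / 2)))) from by ring]
  have hF0pos : 0 < chiCDF v x := by rw [hF0]; positivity
  -- the common column sum D
  set D : ℝ := (v : ℝ) * ((1 / 2) * (chiCDF ((v : ℝ) + 4) x / chiCDF v x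
      - (chiCDF ((v : ℝ) + 2) x) ^ 2 / (chiCDF v x) ^ 2))
      + chiCDF ((v : ℝ) + 4) x / chiCDF v x with hDdef
  have hcol : ∀ j : Fin v, ∑ k : Fin v, Jmat v x k j = D := by
    intro j
    have step : ∀ k : Fin v, Jmat v x k j =
        (1 / 2) * (chiCDF ((v : ℝ) + 4) x / chiCDF v x
          - (chiCDF ((v : ℝ) + 2) x) ^ 2 / (chiCDF v x) ^ 2)
        + (if k = j then (1 : ℝ) else 0) * (chiCDF ((v : ℝ) + 4) x / chiCDF v x) := by
      intro k
      simp only [Jmat, Matrix.of_apply]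
      split_ifs <;> ring
    rw [Finset.sum_congr rfl fun k _ => step k, Finset.sum_add_distrib, Finset.sum_const,
      ← Finset.sum_mul]
    have : ∑ k : Fin v, (if k = j then (1 : ℝ) else 0) = 1 := by
      simp [Finset.sum_ite_eq']
    rw [this, hDdef]
    simp [Finset.card_univ, nsmul_eq_mul]
  have hDpos : 0 < D := by
    have hDval : D = (Gg p x * Gg (p + 2) x - (Gg (p + 1) x) ^ 2)
        / (2 * (v : ℝ) * (Gg p x) ^ 2) := by
      rw [hDdef, hF0, hF2, hF4]
      field_simp
      ring
    rw [hDval]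
    apply div_pos (by linarith) (by positivity)
  have hsum : D * (∑ j : Fin v, lam j) = 0 := by
    calc D * (∑ j : Fin v, lam j) = ∑ j : Fin v, D * lam j := Finset.mul_sum _ _ _
      _ = ∑ j : Fin v, (∑ k : Fin v, Jmat v x k j) * lam j := by
          refine Finset.sum_congr rfl fun j _ => ?_
          rw [hcol j]
      _ = ∑ j : Fin v, ∑ k : Fin v, Jmat v x k j * lam j := by
          refine Finset.sum_congr rfl fun j _ => ?_
          rw [Finset.sum_mul]
      _ = ∑ k : Fin v, ∑ j : Fin v, Jmat v x k j * lam j := Finset.sum_comm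
      _ = ∑ k : Fin v, b k := Finset.sum_congr rfl fun k _ => h k
      _ = 0 := hb
  exact (mul_eq_zero.mp hsum).resolve_left (ne_of_gt hDpos)
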